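/- Let k be a field, B an integral domain which is a k-algebra, and A ⊆ B a k-subalgebra such that the quotient k-vector space B/A is finite dimensional. Let f ∈ A with f ≠ 0, and assume the k-vector space B/fB is finite dimensional. Then dim_k (A/fA) = dim_k (B/fB). -/

import Mathlib

set_option maxHeartbeats 1000000

theorem order_via_normalisation
    {k B : Type*} [Field k] [CommRing B] [IsDomain B] [Algebra k B]
    (A : Subalgebra k B)
    [FiniteDimensional k (B ⧸ (Subalgebra.toSubmodule A))]
    (f : B) (hfA : f ∈ A) (hf : f ≠ 0)
    [FiniteDimensional k (B ⧸ Ideal.span {f})] :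
    Module.finrank k (A ⧸ Ideal.span {(⟨f, hfA⟩ : A)}) =
      Module.finrank k (B ⧸ Ideal.span {f}) := by
  classical
  set I : Ideal A := Ideal.span {(⟨f, hfA⟩ : A)} with hI
  set q1 : Submodule k B := Subalgebra.toSubmodule A with hq1
  set q2 : Submodule k B := (Ideal.span {f}).restrictScalars k with hq2
  set p : Submodule k B := Submodule.map q1.subtype (I.restrictScalars k) with hp
  have hmemp : ∀ b : B, b ∈ p ↔ ∃ c ∈ A, b = f * c := by
    intro b
    constructor
    · rintro ⟨⟨y, hy⟩, hyI, rfl⟩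
      have : (⟨y, hy⟩ : A) ∈ I := hyI
      rw [hI, Ideal.mem_span_singleton] at this
      obtain ⟨c, hc⟩ := this
      exact ⟨(c : B), c.2, by simpa using congrArg Subtype.val hc⟩
    · rintro ⟨c, hc, rfl⟩
      refine ⟨⟨f * c, A.mul_mem hfA hc⟩, ?_, rfl⟩
      show (⟨f * c, _⟩ : A) ∈ I
      rw [hI, Ideal.mem_span_singleton]
      exact ⟨⟨c, hc⟩, rfl⟩
  have hpq1 : p ≤ q1 := by
    rintro x ⟨⟨y, hy⟩, -, rfl⟩; exact hy
  have hpq2 : p ≤ q2 := by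
    intro x hx
    obtain ⟨c, hc, rfl⟩ := (hmemp x).1 hx
    simp only [hq2, Submodule.restrictScalars_mem, Ideal.mem_span_singleton]
    exact ⟨c, rfl⟩
  -- first map : A → B ⧸ p
  set ψ1 : A →ₗ[k] B ⧸ p := p.mkQ ∘ₗ q1.subtype with hψ1
  have hker1 : LinearMap.ker ψ1 = I.restrictScalars k := by
    rw [hψ1, LinearMap.ker_comp, Submodule.ker_mkQ, hp,
      Submodule.comap_map_eq_of_injective q1.injective_subtype]
  have hrange1 : LinearMap.range ψ1 = q1.map p.mkQ := by
    rw [hψ1, LinearMap.range_comp, Submodule.range_subtype]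
  -- second map : B → B ⧸ p, x ↦ f * x
  set ψ2 : B →ₗ[k] B ⧸ p := p.mkQ ∘ₗ LinearMap.mulLeft k f with hψ2
  have hker2 : LinearMap.ker ψ2 = q1 := by
    ext x
    simp only [hψ2, LinearMap.mem_ker, LinearMap.comp_apply, LinearMap.mulLeft_apply,
      Submodule.mkQ_apply, Submodule.Quotient.mk_eq_zero]
    rw [hmemp]
    constructor
    · rintro ⟨c, hc, hfc⟩
      exact (mul_left_cancel₀ hf hfc) ▸ hc
    · intro hx; exact ⟨x, hx, rfl⟩
  have hrange2 : LinearMap.range ψ2 = q2.map p.mkQ := by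
    rw [hψ2, LinearMap.range_comp]
    congr 1
    ext b
    simp only [LinearMap.mem_range, LinearMap.mulLeft_apply, hq2,
      Submodule.restrictScalars_mem, Ideal.mem_span_singleton]
    constructor
    · rintro ⟨y, rfl⟩; exact ⟨y, rfl⟩
    · rintro ⟨y, rfl⟩; exact ⟨y, rfl⟩
  -- key equivalences
  let E1 : (A ⧸ I.restrictScalars k) ≃ₗ[k] q1.map p.mkQ :=
    (Submodule.quotEquivOfEq _ _ hker1.symm).trans
      ((LinearMap.quotKerEquivRange ψ1).trans (LinearEquiv.ofEq _ _ hrange1))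
  let E2 : (B ⧸ q1) ≃ₗ[k] q2.map p.mkQ :=
    (Submodule.quotEquivOfEq _ _ hker2.symm).trans
      ((LinearMap.quotKerEquivRange ψ2).trans (LinearEquiv.ofEq _ _ hrange2))
  have e1 : Module.finrank k (A ⧸ I) = Module.finrank k (q1.map p.mkQ) := by
    rw [← LinearEquiv.finrank_eq (Submodule.Quotient.restrictScalarsEquiv k I)]
    exact LinearEquiv.finrank_eq E1
  have e2 : Module.finrank k (B ⧸ q1) = Module.finrank k (q2.map p.mkQ) :=
    LinearEquiv.finrank_eq E2
  have e3 : Module.finrank k ((B ⧸ p) ⧸ q1.map p.mkQ) = Module.finrank k (B ⧸ q1) :=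
    LinearEquiv.finrank_eq (Submodule.quotientQuotientEquivQuotient p q1 hpq1)
  have e4 : Module.finrank k ((B ⧸ p) ⧸ q2.map p.mkQ) = Module.finrank k (B ⧸ q2) :=
    LinearEquiv.finrank_eq (Submodule.quotientQuotientEquivQuotient p q2 hpq2)
  -- finite dimensionality
  have hfdq1 : FiniteDimensional k (B ⧸ q1) := by rwa [hq1]
  have hfdq2 : FiniteDimensional k (B ⧸ q2) :=
    (Submodule.Quotient.restrictScalarsEquiv k (Ideal.span {f})).symm.finiteDimensional
  have hfdsub : FiniteDimensional k (q2.map p.mkQ) := Module.Finite.equiv E2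
  have hfdquot : FiniteDimensional k ((B ⧸ p) ⧸ q2.map p.mkQ) :=
    (Submodule.quotientQuotientEquivQuotient p q2 hpq2).symm.finiteDimensional
  have hfd : FiniteDimensional k (B ⧸ p) := by
    exact IsNoetherian.iff_fg.mp ((isNoetherian_iff_submodule_quotient (q2.map p.mkQ)).mpr
      ⟨IsNoetherian.iff_fg.mpr hfdsub, IsNoetherian.iff_fg.mpr hfdquot⟩)
  have h1 := Submodule.finrank_quotient_add_finrank (R := k) (q1.map p.mkQ)
  have h2 := Submodule.finrank_quotient_add_finrank (R := k) (q2.map p.mkQ)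
  have hfinal : Module.finrank k (B ⧸ Ideal.span {f}) = Module.finrank k (B ⧸ q2) :=
    (LinearEquiv.finrank_eq (Submodule.Quotient.restrictScalarsEquiv k (Ideal.span {f}))).symm
  rw [hfinal]
  omega
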